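/- Let ε ∈ (0, 1/6), let A ⊆ {±1}^n be symmetric (A = −A) with any two distinct points differing in more than 3εn coordinates, and let Y = {±1}^{3εn} × {0}^{(1−3ε)n} ⊂ ℝ^n. Suppose f : A ∪ Y → ℝ has expansion at most 1+ε in the Euclidean metric and f(y) = 0 for all y ∈ Y. Then f satisfies no antipodal pair of A: for every x ∈ A, |f(x) − f(−x)| ≤ (1+ε)·2·√((1−3ε)n) < √(4n). -/

import Mathlib

lemma stmt19_card (n m : ℕ) :
    (Finset.univ.filter (fun i : Fin n => m ≤ (i:ℕ))).card = n - m := by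
  rcases lt_or_ge m n with h | h
  · have : (Finset.univ.filter (fun i : Fin n => m ≤ (i:ℕ))) = Finset.Ici (⟨m, h⟩ : Fin n) := by
      ext i; simp [Fin.le_def]
    rw [this, Fin.card_Ici]
  · have : (Finset.univ.filter (fun i : Fin n => m ≤ (i:ℕ))) = ∅ := by
      ext i; simp; omega
    rw [this]; simp; omega

/-- let `ε ∈ (0, 1/6)`, let `A ⊆ {±1}^n` be symmetric with distinct
points differing in more than `3εn` coordinates, and let `Y` be the set of vectors that
are `±1` on the first `m ≥ 3εn` coordinates and `0` afterwards.  If `f` has expansion at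
most `1+ε` on `A ∪ Y` (Euclidean metric) and vanishes on `Y`, then `f` satisfies no
antipodal pair of `A`: `|f(x) - f(-x)| ≤ (1+ε)·2·√((1-3ε)n) < √(4n)` for all `x ∈ A`. -/
theorem stmt19 (ε : ℝ) (hε0 : 0 < ε) (hε1 : ε < 1 / 6) (n m : ℕ) (hn : 0 < n)
    (hm1 : 3 * ε * n ≤ m) (hm2 : m ≤ n)
    (A : Set (EuclideanSpace ℝ (Fin n)))
    (hpm : ∀ x ∈ A, ∀ k, x k = 1 ∨ x k = -1)
    (hsym : ∀ x ∈ A, -x ∈ A)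
    (hsep : ∀ x ∈ A, ∀ y ∈ A, x ≠ y →
      3 * ε * n < (Finset.univ.filter (fun k : Fin n => x k ≠ y k)).card)
    (Y : Set (EuclideanSpace ℝ (Fin n)))
    (hY : Y = {y | (∀ k : Fin n, (k : ℕ) < m → y k = 1 ∨ y k = -1) ∧
                   (∀ k : Fin n, m ≤ (k : ℕ) → y k = 0)})
    (f : EuclideanSpace ℝ (Fin n) → ℝ)
    (hexp : ∀ p ∈ A ∪ Y, ∀ q ∈ A ∪ Y, |f p - f q| ≤ (1 + ε) * dist p q)
    (hzero : ∀ y ∈ Y, f y = 0) :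
    ∀ x ∈ A,
      |f x - f (-x)| ≤ (1 + ε) * 2 * Real.sqrt ((1 - 3 * ε) * n) ∧
      (1 + ε) * 2 * Real.sqrt ((1 - 3 * ε) * n) < Real.sqrt (4 * n) := by
  intro x hx
  have hε6 : (0:ℝ) ≤ 1 - 3 * ε := by linarith
  constructor
  · -- main bound
    set y : EuclideanSpace ℝ (Fin n) := WithLp.toLp 2 (fun k : Fin n => if (k:ℕ) < m then x k else 0) with hy
    have hyval : ∀ k : Fin n, y k = if (k:ℕ) < m then x k else 0 := fun k => rfl
    have hyY : y ∈ Y := by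
      rw [hY]
      constructor
      · intro k hk; rw [hyval k, if_pos hk]; exact hpm x hx k
      · intro k hk; rw [hyval k, if_neg (not_lt.mpr hk)]
    have hnyY : -y ∈ Y := by
      rw [hY]
      constructor
      · intro k hk
        have h0 : (-y) k = -(y k) := rfl
        rw [h0, hyval k, if_pos hk]
        rcases hpm x hx k with h | h <;> simp [h]
      · intro k hk
        have h0 : (-y) k = -(y k) := rfl
        rw [h0, hyval k, if_neg (not_lt.mpr hk), neg_zero]
    -- distance computation
    have hdist : dist x y = Real.sqrt ((n : ℝ) - m) := by
      rw [EuclideanSpace.dist_eq]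
      congr 1
      have key : ∀ i : Fin n, dist (x i) (y i) ^ 2 = if m ≤ (i:ℕ) then (1:ℝ) else 0 := by
        intro i
        rw [Real.dist_eq, sq_abs, hyval i]
        by_cases hi : (i:ℕ) < m
        · rw [if_pos hi, if_neg (not_le.mpr hi), sub_self]; ring
        · rw [if_neg hi, if_pos (not_lt.mp hi), sub_zero]
          rcases hpm x hx i with h | h <;> rw [h] <;> norm_num
      rw [Finset.sum_congr rfl (fun i _ => key i), Finset.sum_ite, Finset.sum_const,
        Finset.sum_const]
      simp [stmt19_card n m, Nat.cast_sub hm2]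
    have hdist2 : dist (-x) (-y) = Real.sqrt ((n : ℝ) - m) := by
      rw [dist_neg_neg]; exact hdist
    have hdle : Real.sqrt ((n : ℝ) - m) ≤ Real.sqrt ((1 - 3 * ε) * n) := by
      apply Real.sqrt_le_sqrt; nlinarith
    have hxA : x ∈ A ∪ Y := Or.inl hx
    have hnxA : -x ∈ A ∪ Y := Or.inl (hsym x hx)
    have h1 := hexp x hxA y (Or.inr hyY)
    have h2 := hexp (-x) hnxA (-y) (Or.inr hnyY)
    rw [hzero y hyY] at h1
    rw [hzero (-y) hnyY] at h2
    have h1' : |f x - f (-x)| ≤ |f x - 0| + |f (-x) - 0| := by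
      rw [sub_zero, sub_zero]
      exact (abs_sub _ _)
    have hεpos : (0:ℝ) ≤ 1 + ε := by linarith
    calc |f x - f (-x)| ≤ |f x - 0| + |f (-x) - 0| := h1'
      _ ≤ (1 + ε) * dist x y + (1 + ε) * dist (-x) (-y) := add_le_add h1 h2
      _ = (1 + ε) * 2 * Real.sqrt ((n:ℝ) - m) := by rw [hdist, hdist2]; ring
      _ ≤ (1 + ε) * 2 * Real.sqrt ((1 - 3 * ε) * n) := by
          apply mul_le_mul_of_nonneg_left hdle; linarith
  · -- strict inequality
    have hnpos : (0:ℝ) < n := by exact_mod_cast hn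
    have hsq : ((1 + ε) * 2 * Real.sqrt ((1 - 3 * ε) * n)) ^ 2 < (Real.sqrt (4 * n)) ^ 2 := by
      rw [Real.sq_sqrt (by positivity), mul_pow, mul_pow,
        Real.sq_sqrt (by positivity)]
      nlinarith [sq_nonneg ε, mul_pos hε0 hnpos]
    have hpos : (0:ℝ) ≤ (1 + ε) * 2 * Real.sqrt ((1 - 3 * ε) * n) := by positivity
    nlinarith [Real.sqrt_nonneg (4 * (n:ℝ))]
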